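/- (Interpolation lemma for Theorem 2). Suppose along the subsequence t(n)=nM the distances ρ_n(ω):=ρ(x_{t(n)}^a(ω), x̄_{t(n)}(ω)) satisfy limsup_n (1/t(n)) ln ρ_n ≤ c < 0 a.s., the random variables κ_n(ω):=κ(T^{t(n)}ω) satisfy E|ln κ|<∞, and the Hölder bound ρ(C_t(x,T^{t(n)}ω), x̄_{t(n)+t}(ω)) ≤ H(T^{t(n)}ω) ρ(x, x̄_{t(n)}(ω))^b holds for 0≤t≤M whenever ρ(x,x̄_{t(n)}(ω))≤κ_n(ω), with E|ln H|<∞. Then a.s. limsup_{t→∞}(1/t) ln ρ(x_t^a(ω), x̄_t(ω)) ≤ bc. -/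

import Mathlib

open MeasureTheory Filter NNReal ENNReal

section Aux

variable {Ω : Type*} [MeasurableSpace Ω]

private lemma sInf_aux {S : Set ℝ} {c : ℝ} (h : sInf S ≤ c) (hc : c < 0) :
    S.Nonempty ∧ BddBelow S := by
  by_cases hne : S.Nonempty
  · refine ⟨hne, ?_⟩
    by_contra hbd
    rw [Real.sInf_of_not_bddBelow hbd] at h
    linarith
  · rw [Set.not_nonempty_iff_eq_empty] at hne
    rw [hne, Real.sInf_empty] at h
    linarith

private lemma exists_mem_lt_of_sInf_le {S : Set ℝ} {c x : ℝ} (h : sInf S ≤ c) (hc : c < 0)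
    (hx : c < x) : ∃ y ∈ S, y < x := by
  obtain ⟨hne, hbd⟩ := sInf_aux h hc
  exact (csInf_lt_iff hbd hne).1 (h.trans_lt hx)

private lemma tail_sum (μ : Measure Ω) [IsProbabilityMeasure μ] {g : Ω → ℝ}
    (hgm : Measurable g) (hgi : Integrable g μ) {ε : ℝ} (hε : 0 < ε) :
    (∑' n : ℕ, μ {ω | ε * n ≤ |g ω|}) ≠ ∞ := by
  have hms : ∀ n : ℕ, MeasurableSet {ω | ε * n ≤ |g ω|} := fun n =>
    measurableSet_le measurable_const hgm.abs
  have key : ∀ ω, (∑' n : ℕ, Set.indicator {ω' | ε * n ≤ |g ω'|} (1 : Ω → ℝ≥0∞) ω)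
      ≤ ENNReal.ofReal (|g ω| / ε) + 1 := by
    intro ω
    set r : ℝ := |g ω| / ε with hr
    have hr0 : 0 ≤ r := div_nonneg (abs_nonneg _) hε.le
    have hout : ∀ n : ℕ, n ∉ Finset.range (⌊r⌋₊ + 1) →
        Set.indicator {ω' | ε * n ≤ |g ω'|} (1 : Ω → ℝ≥0∞) ω = 0 := by
      intro n hn
      rw [Finset.mem_range, not_lt] at hn
      apply Set.indicator_of_notMem
      simp only [Set.mem_setOf_eq, not_le]
      have h1 : r < n := lt_of_lt_of_le (Nat.lt_floor_add_one _) (by exact_mod_cast hn)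
      have h2 : |g ω| = r * ε := by rw [hr, div_mul_cancel₀ _ hε.ne']
      rw [h2, mul_comm ε (n : ℝ)]
      exact mul_lt_mul_of_pos_right h1 hε
    calc (∑' n : ℕ, Set.indicator {ω' | ε * n ≤ |g ω'|} (1 : Ω → ℝ≥0∞) ω)
        = ∑ n ∈ Finset.range (⌊r⌋₊ + 1),
            Set.indicator {ω' | ε * n ≤ |g ω'|} (1 : Ω → ℝ≥0∞) ω := tsum_eq_sum hout
      _ ≤ ∑ _n ∈ Finset.range (⌊r⌋₊ + 1), 1 := by
          refine Finset.sum_le_sum fun n _ => ?_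
          classical
          by_cases h : ω ∈ {ω' | ε * n ≤ |g ω'|}
          · rw [Set.indicator_of_mem h]; simp
          · rw [Set.indicator_of_notMem h]; exact zero_le
      _ = ((⌊r⌋₊ : ℝ≥0∞) + 1) := by simp [Finset.sum_const]
      _ ≤ ENNReal.ofReal r + 1 := by
          refine add_le_add ?_ le_rfl
          rw [← ENNReal.ofReal_natCast]
          exact ENNReal.ofReal_le_ofReal (Nat.floor_le hr0)
  have h1 : (∑' n : ℕ, μ {ω | ε * n ≤ |g ω|})
      = ∫⁻ ω, ∑' n : ℕ, Set.indicator {ω' | ε * n ≤ |g ω'|} (1 : Ω → ℝ≥0∞) ω ∂μ := by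
    rw [lintegral_tsum fun n => (measurable_one.indicator (hms n)).aemeasurable]
    exact tsum_congr fun n => (lintegral_indicator_one (hms n)).symm
  have h2 : (∫⁻ ω, (ENNReal.ofReal (|g ω| / ε) + 1) ∂μ) < ∞ := by
    rw [lintegral_add_right _ measurable_const, lintegral_one, measure_univ]
    have h3 : (∫⁻ ω, ENNReal.ofReal (|g ω| / ε) ∂μ) < ∞ := by
      have heq : ∀ ω, ENNReal.ofReal (|g ω| / ε) =
          (‖g ω‖₊ : ℝ≥0∞) * ENNReal.ofReal ε⁻¹ := by
        intro ω
        rw [div_eq_mul_inv, ENNReal.ofReal_mul (abs_nonneg _), ← enorm_eq_nnnorm, Real.enorm_eq_ofReal_abs]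
      simp_rw [heq]
      rw [lintegral_mul_const' _ _ ENNReal.ofReal_ne_top]
      exact ENNReal.mul_lt_top hgi.hasFiniteIntegral ENNReal.ofReal_lt_top
    exact ENNReal.add_lt_top.2 ⟨h3, ENNReal.one_lt_top⟩
  rw [h1]
  exact ((lintegral_mono key).trans_lt h2).ne

private lemma bc_aux (μ : Measure Ω) [IsProbabilityMeasure μ] {S : Ω → Ω}
    (hS : MeasurePreserving S μ μ) {g : Ω → ℝ} (hgm : Measurable g) (hgi : Integrable g μ) :
    ∀ᵐ ω ∂μ, ∀ ε : ℝ, 0 < ε → ∀ᶠ n : ℕ in atTop, |g (S^[n] ω)| ≤ ε * n := by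
  have main : ∀ k : ℕ, ∀ᵐ ω ∂μ, ∀ᶠ n : ℕ in atTop,
      |g (S^[n] ω)| ≤ ((k : ℝ) + 1)⁻¹ * n := by
    intro k
    have hε : (0:ℝ) < ((k : ℝ) + 1)⁻¹ := by positivity
    have hms : ∀ n : ℕ, MeasurableSet {ω | ((k : ℝ) + 1)⁻¹ * n ≤ |g ω|} := fun n =>
      measurableSet_le measurable_const hgm.abs
    have hsum := tail_sum μ hgm hgi hε
    have hmp : ∀ n : ℕ, μ (S^[n] ⁻¹' {ω | ((k : ℝ) + 1)⁻¹ * n ≤ |g ω|})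
        = μ {ω | ((k : ℝ) + 1)⁻¹ * n ≤ |g ω|} := fun n =>
      (hS.iterate n).measure_preimage (hms n).nullMeasurableSet
    have hsum' : (∑' n : ℕ, μ (S^[n] ⁻¹' {ω | ((k : ℝ) + 1)⁻¹ * n ≤ |g ω|})) ≠ ∞ := by
      rw [tsum_congr hmp]; exact hsum
    filter_upwards [ae_eventually_notMem hsum'] with ω hω
    refine hω.mono fun n hn => ?_
    simp only [Set.mem_preimage, Set.mem_setOf_eq, not_le] at hn
    exact hn.le
  filter_upwards [ae_all_iff.2 main] with ω hω ε hε
  obtain ⟨k, hk⟩ := exists_nat_gt ε⁻¹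
  have hk' : ((k : ℝ) + 1)⁻¹ ≤ ε := by
    have h2 : (0:ℝ) < (k : ℝ) + 1 := by
      have := (inv_pos.2 hε).trans hk
      positivity
    rw [inv_le_comm₀ h2 hε]
    exact le_of_lt (hk.trans (lt_add_one _))
  refine (hω k).mono fun n hn => hn.trans ?_
  exact mul_le_mul_of_nonneg_right hk' (Nat.cast_nonneg n)

end Aux

/-- Interpolation lemma for Theorem 2: exponential convergence along the subsequence
`t(n) = nM`, together with the Hölder bound on the intermediate times, yields exponential
convergence (with rate `bc`) along all times. -/
theorem stmt12 {Ω : Type*} [MeasurableSpace Ω] (μ : Measure Ω) [IsProbabilityMeasure μ]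
    {X : Type*} [MetricSpace X]
    (T : ℝ≥0 → Ω → Ω) (hTmp : ∀ t, MeasurePreserving (T t) μ μ)
    (hT0 : T 0 = id) (hTadd : ∀ t s, T (t + s) = T s ∘ T t)
    (C : ℝ≥0 → X → Ω → X) (hC0 : ∀ x ω, C 0 x ω = x)
    (hCadd : ∀ t s x ω, C (t + s) x ω = C s (C t x ω) (T t ω))
    (xbar : Ω → X)
    (M : ℝ≥0) (hM : 0 < M) (a : X)
    (c : ℝ) (hc : c < 0)
    (hsub : ∀ᵐ ω ∂μ, limsup (fun n : ℕ =>
      Real.log (dist (C ((n : ℝ≥0) * M) a ω) (xbar (T ((n : ℝ≥0) * M) ω))) /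
        ((n : ℝ) * (M : ℝ))) atTop ≤ c)
    (H κ : Ω → ℝ) (hHmeas : Measurable H) (hκmeas : Measurable κ)
    (hHpos : ∀ ω, 0 < H ω) (hκpos : ∀ ω, 0 < κ ω)
    (hHint : Integrable (fun ω => Real.log (H ω)) μ)
    (hκint : Integrable (fun ω => Real.log (κ ω)) μ)
    (b : ℝ) (hb : 0 < b)
    (hHolder : ∀ᵐ ω ∂μ, ∀ n : ℕ, ∀ x : X,
      dist x (xbar (T ((n : ℝ≥0) * M) ω)) ≤ κ (T ((n : ℝ≥0) * M) ω) → ∀ t ≤ M,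
        dist (C t x (T ((n : ℝ≥0) * M) ω)) (xbar (T t (T ((n : ℝ≥0) * M) ω))) ≤
          H (T ((n : ℝ≥0) * M) ω) * dist x (xbar (T ((n : ℝ≥0) * M) ω)) ^ b) :
    ∀ᵐ ω ∂μ, limsup (fun t : ℝ≥0 =>
      Real.log (dist (C t a ω) (xbar (T t ω))) / (t : ℝ)) atTop ≤ b * c := by
  have hiterate : ∀ n : ℕ, T ((n : ℝ≥0) * M) = (T M)^[n] := by
    intro n
    induction n with
    | zero => simpa using hT0
    | succ n ih =>
      have hcast : ((n + 1 : ℕ) : ℝ≥0) * M = (n : ℝ≥0) * M + M := by push_cast; ring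
      rw [hcast, hTadd, ih, Function.iterate_succ']
  have hHa := bc_aux μ (hTmp M) hHmeas.log hHint
  have hKa := bc_aux μ (hTmp M) hκmeas.log hκint
  filter_upwards [hsub, hHolder, hHa, hKa] with ω hsubω hHol hHaω hKaω
  set d : ℝ≥0 → ℝ := fun t => dist (C t a ω) (xbar (T t ω)) with hd
  set g : ℕ → ℝ := fun n =>
    Real.log (dist (C ((n : ℝ≥0) * M) a ω) (xbar (T ((n : ℝ≥0) * M) ω))) /
      ((n : ℝ) * (M : ℝ)) with hg
  rw [Filter.limsup_eq] at hsubω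
  rw [Filter.limsup_eq]
  set S₀ : Set ℝ := {x | ∀ᶠ n : ℕ in atTop, g n ≤ x} with hS₀
  have hMpos : (0 : ℝ) < (M : ℝ) := by exact_mod_cast hM
  have hiter : ∀ n : ℕ, T ((n : ℝ≥0) * M) ω = (T M)^[n] ω := fun n =>
    congrFun (hiterate n) ω
  -- invariance of xbar along each block
  have hinv : ∀ n : ℕ, ∀ t ≤ M,
      C t (xbar (T ((n : ℝ≥0) * M) ω)) (T ((n : ℝ≥0) * M) ω)
        = xbar (T t (T ((n : ℝ≥0) * M) ω)) := by
    intro n t ht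
    have h0 : dist (xbar (T ((n : ℝ≥0) * M) ω)) (xbar (T ((n : ℝ≥0) * M) ω))
        ≤ κ (T ((n : ℝ≥0) * M) ω) := by
      rw [dist_self]; exact (hκpos _).le
    have := hHol n _ h0 t ht
    rw [dist_self, Real.zero_rpow hb.ne', mul_zero] at this
    exact dist_le_zero.mp this
  -- zero propagation
  have hzero : ∀ (n : ℕ) (s : ℝ≥0), s ≤ M → d ((n : ℝ≥0) * M + s) = 0 →
      d (((n + 1 : ℕ) : ℝ≥0) * M) = 0 := by
    intro n s hs h0
    have hcast : ((n + 1 : ℕ) : ℝ≥0) * M = ((n : ℝ≥0) * M + s) + (M - s) := by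
      push_cast
      rw [add_assoc, add_tsub_cancel_of_le hs]
      ring
    have heq : C ((n : ℝ≥0) * M + s) a ω = xbar (T ((n : ℝ≥0) * M + s) ω) :=
      dist_eq_zero.mp h0
    have hT1 : T ((n : ℝ≥0) * M + s) ω = T s (T ((n : ℝ≥0) * M) ω) :=
      congrFun (hTadd _ s) ω
    have hxb : xbar (T ((n : ℝ≥0) * M + s) ω)
        = C s (xbar (T ((n : ℝ≥0) * M) ω)) (T ((n : ℝ≥0) * M) ω) := by
      rw [hT1, ← hinv n s hs]
    have hT2 : T (((n + 1 : ℕ) : ℝ≥0) * M) ω = T M (T ((n : ℝ≥0) * M) ω) := by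
      have hc2 : ((n + 1 : ℕ) : ℝ≥0) * M = (n : ℝ≥0) * M + M := by push_cast; ring
      rw [hc2]
      exact congrFun (hTadd ((n : ℝ≥0) * M) M) ω
    have hkey : C (((n + 1 : ℕ) : ℝ≥0) * M) a ω = xbar (T (((n + 1 : ℕ) : ℝ≥0) * M) ω) := by
      rw [hcast, hCadd, heq, hxb, hT1, ← hCadd, add_tsub_cancel_of_le hs, hinv n M le_rfl,
        ← hcast, hT2]
    simp only [hd]
    rw [hkey, dist_self]
  -- positivity of the distance at all times
  have hpos : ∀ t : ℝ≥0, 0 < d t := by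
    intro t
    rcases (dist_nonneg : 0 ≤ d t).lt_or_eq with h | h
    · exact h
    exfalso
    set n : ℕ := ⌊(t / M : ℝ≥0)⌋₊ with hn
    have h1 : (n : ℝ≥0) * M ≤ t := by
      have := Nat.floor_le (zero_le : (0:ℝ≥0) ≤ t / M)
      calc (n : ℝ≥0) * M ≤ (t / M) * M := mul_le_mul_left this M
        _ = t := div_mul_cancel₀ t hM.ne'
    have h2 : t ≤ (n : ℝ≥0) * M + M := by
      have := (Nat.lt_floor_add_one (t / M)).le
      calc t = (t / M) * M := (div_mul_cancel₀ t hM.ne').symm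
        _ ≤ ((n : ℝ≥0) + 1) * M := mul_le_mul_left this M
        _ = (n : ℝ≥0) * M + M := by ring
    have hs : t - (n : ℝ≥0) * M ≤ M := tsub_le_iff_left.2 h2
    have ht : (n : ℝ≥0) * M + (t - (n : ℝ≥0) * M) = t := add_tsub_cancel_of_le h1
    have h3 : d (((n + 1 : ℕ) : ℝ≥0) * M) = 0 := by
      apply hzero n _ hs
      rw [ht]; exact h.symm
    have h4 : ∀ m : ℕ, d (((n + 1 + m : ℕ) : ℝ≥0) * M) = 0 := by
      intro m
      induction m with
      | zero => simpa using h3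
      | succ m ih =>
        have := hzero (n + 1 + m) 0 (zero_le : (0:ℝ≥0) ≤ M) (by simpa using ih)
        simpa [add_assoc] using this
    have hev0 : ∀ᶠ m : ℕ in atTop, g m = 0 := by
      rw [eventually_atTop]
      refine ⟨n + 1, fun m hm => ?_⟩
      have hdm : d ((m : ℝ≥0) * M) = 0 := by
        obtain ⟨k, rfl⟩ := Nat.exists_eq_add_of_le hm
        exact h4 k
      simp only [hg]
      simp only [hd] at hdm
      rw [hdm, Real.log_zero, zero_div]
    have hge : 0 ≤ sInf S₀ := by
      apply Real.sInf_nonneg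
      intro x hx
      have hx' : ∀ᶠ m : ℕ in atTop, g m ≤ x := hx
      obtain ⟨m, hm1, hm2⟩ := (hx'.and hev0).exists
      linarith [hm1, hm2.symm.le]
    linarith
  -- boundedness facts for S₀
  obtain ⟨hS₀ne, hS₀bd⟩ := sInf_aux hsubω hc
  obtain ⟨L, hL⟩ := hS₀bd
  set S' : Set ℝ := {x | ∀ᶠ t : ℝ≥0 in atTop,
    Real.log (dist (C t a ω) (xbar (T t ω))) / (t : ℝ) ≤ x} with hS'
  have htendnM : Tendsto (fun n : ℕ => (n : ℝ≥0) * M) atTop atTop :=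
    Tendsto.atTop_mul_const hM tendsto_natCast_atTop_atTop
  have hS'bd : BddBelow S' := by
    refine ⟨L, fun x hx => ?_⟩
    apply hL
    have hx' : ∀ᶠ t : ℝ≥0 in atTop,
        Real.log (dist (C t a ω) (xbar (T t ω))) / (t : ℝ) ≤ x := hx
    have hev := htendnM.eventually hx'
    show ∀ᶠ n : ℕ in atTop, g n ≤ x
    refine hev.mono fun n hn => ?_
    simp only [hg]
    have hcoe : (((n : ℝ≥0) * M : ℝ≥0) : ℝ) = (n : ℝ) * (M : ℝ) := by push_cast; ring
    rw [hcoe] at hn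
    exact hn
  show sInf S' ≤ b * c
  refine le_of_forall_pos_le_add fun δ hδ => ?_
  -- choose ε > 0 small enough
  have hevε : ∀ᶠ ε : ℝ in nhdsWithin 0 (Set.Ioi 0),
      ε < 1 ∧ (M : ℝ) * c * (1 - ε) + ε ≤ 0 ∧ ε + b * ((M : ℝ) * c * (1 - ε)) ≤ 0 ∧
        (ε + b * ((M : ℝ) * c * (1 - ε))) / (M : ℝ) < b * c + δ := by
    have cont1 : ContinuousAt (fun ε : ℝ => (M : ℝ) * c * (1 - ε) + ε) 0 := by fun_prop
    have cont2 : ContinuousAt (fun ε : ℝ => ε + b * ((M : ℝ) * c * (1 - ε))) 0 := by fun_prop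
    have cont3 : ContinuousAt
        (fun ε : ℝ => (ε + b * ((M : ℝ) * c * (1 - ε))) / (M : ℝ)) 0 := by fun_prop
    have h1 : ∀ᶠ ε : ℝ in nhds (0:ℝ), (M : ℝ) * c * (1 - ε) + ε < 0 := by
      refine cont1.eventually_lt continuousAt_const ?_
      simp only [sub_zero, mul_one, add_zero]
      exact mul_neg_of_pos_of_neg hMpos hc
    have h2 : ∀ᶠ ε : ℝ in nhds (0:ℝ), ε + b * ((M : ℝ) * c * (1 - ε)) < 0 := by
      refine cont2.eventually_lt continuousAt_const ?_
      simp only [sub_zero, mul_one, zero_add]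
      exact mul_neg_of_pos_of_neg hb (mul_neg_of_pos_of_neg hMpos hc)
    have h3 : ∀ᶠ ε : ℝ in nhds (0:ℝ),
        (ε + b * ((M : ℝ) * c * (1 - ε))) / (M : ℝ) < b * c + δ := by
      refine cont3.eventually_lt continuousAt_const ?_
      simp only [sub_zero, mul_one, zero_add]
      have hval : b * ((M : ℝ) * c) / (M : ℝ) = b * c := by
        field_simp
      rw [hval]
      linarith
    have h4 : ∀ᶠ ε : ℝ in nhds (0:ℝ), ε < 1 :=
      Tendsto.eventually_lt_const one_pos tendsto_id
    have hle : nhdsWithin (0:ℝ) (Set.Ioi 0) ≤ nhds 0 := nhdsWithin_le_nhds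
    filter_upwards [hle h4, hle h1, hle h2, hle h3] with ε he1 he2 he3 he4
    exact ⟨he1, he2.le, he3.le, he4⟩
  obtain ⟨ε, hεpos, hε1, hε2, hε3, hε4⟩ :
      ∃ ε : ℝ, 0 < ε ∧ ε < 1 ∧ (M : ℝ) * c * (1 - ε) + ε ≤ 0 ∧
        ε + b * ((M : ℝ) * c * (1 - ε)) ≤ 0 ∧
        (ε + b * ((M : ℝ) * c * (1 - ε))) / (M : ℝ) < b * c + δ := by
    obtain ⟨ε, hmem, h⟩ := (hevε.and (eventually_mem_nhdsWithin)).exists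
    exact ⟨ε, h, hmem.1, hmem.2.1, hmem.2.2.1, hmem.2.2.2⟩
  set A : ℝ := ε + b * ((M : ℝ) * c * (1 - ε)) with hA
  -- eventual bounds along the subsequence
  have F1 : ∀ᶠ n : ℕ in atTop, g n ≤ c * (1 - ε) := by
    have hclt : c < c * (1 - ε) := by nlinarith
    obtain ⟨y, hyS, hy⟩ := exists_mem_lt_of_sInf_le hsubω hc hclt
    have hyS' : ∀ᶠ n : ℕ in atTop, g n ≤ y := hyS
    exact hyS'.mono fun n hn => hn.trans hy.le
  have F2 : ∀ᶠ n : ℕ in atTop, |Real.log (H ((T M)^[n] ω))| ≤ ε * n := hHaω ε hεpos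
  have F3 : ∀ᶠ n : ℕ in atTop, |Real.log (κ ((T M)^[n] ω))| ≤ ε * n := hKaω ε hεpos
  have F4 : ∀ᶠ n : ℕ in atTop, (n : ℝ) * A / (((n : ℝ) + 1) * (M : ℝ)) < b * c + δ := by
    have htd : Tendsto (fun n : ℕ => (n : ℝ) * A / (((n : ℝ) + 1) * (M : ℝ))) atTop
        (nhds (A / (M : ℝ))) := by
      have h0 : Tendsto (fun n : ℕ => ((n : ℝ) / ((n : ℝ) + 1)) * (A / (M : ℝ))) atTop
          (nhds (1 * (A / (M : ℝ)))) :=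
        (tendsto_natCast_div_add_atTop (1 : ℝ)).mul_const _
      rw [one_mul] at h0
      refine h0.congr fun n => ?_
      rw [div_mul_div_comm]
    exact htd.eventually_lt_const hε4
  -- the key blockwise bound
  have hQ : ∀ᶠ n : ℕ in atTop, ∀ t : ℝ≥0, (n : ℝ≥0) * M ≤ t → t ≤ ((n : ℝ≥0) + 1) * M →
      Real.log (d t) / (t : ℝ) ≤ b * c + δ := by
    filter_upwards [F1, F2, F3, F4, eventually_ge_atTop 1] with n h1 h2 h3 h4 h5
    intro t htl htu
    rw [← hiter n] at h2 h3
    set ρ : ℝ := d ((n : ℝ≥0) * M) with hρ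
    have hρpos : 0 < ρ := hpos _
    have hnpos : (0 : ℝ) < (n : ℝ) := by exact_mod_cast h5
    have hnM : (0 : ℝ) < (n : ℝ) * (M : ℝ) := mul_pos hnpos hMpos
    have hlogρ : Real.log ρ ≤ (n : ℝ) * ((M : ℝ) * c * (1 - ε)) := by
      have hh := (div_le_iff₀ hnM).mp h1
      calc Real.log ρ ≤ c * (1 - ε) * ((n : ℝ) * (M : ℝ)) := hh
        _ = (n : ℝ) * ((M : ℝ) * c * (1 - ε)) := by ring
    have hρκ : ρ ≤ κ (T ((n : ℝ≥0) * M) ω) := by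
      rw [← Real.log_le_log_iff hρpos (hκpos _)]
      have hk1 : -(ε * n) ≤ Real.log (κ (T ((n : ℝ≥0) * M) ω)) := neg_le_of_abs_le h3
      have hmid : (n : ℝ) * ((M : ℝ) * c * (1 - ε)) ≤ -(ε * n) := by nlinarith
      linarith
    have hsM : t - (n : ℝ≥0) * M ≤ M := by
      rw [tsub_le_iff_left]
      calc t ≤ ((n : ℝ≥0) + 1) * M := htu
        _ = (n : ℝ≥0) * M + M := by ring
    have hts : (n : ℝ≥0) * M + (t - (n : ℝ≥0) * M) = t := add_tsub_cancel_of_le htl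
    have hdt : d t ≤ H (T ((n : ℝ≥0) * M) ω) * ρ ^ b := by
      have happ := hHol n (C ((n : ℝ≥0) * M) a ω) hρκ (t - (n : ℝ≥0) * M) hsM
      have hC : C t a ω = C (t - (n : ℝ≥0) * M) (C ((n : ℝ≥0) * M) a ω)
          (T ((n : ℝ≥0) * M) ω) := by
        conv_lhs => rw [← hts]
        rw [hCadd]
      have hT : T t ω = T (t - (n : ℝ≥0) * M) (T ((n : ℝ≥0) * M) ω) := by
        conv_lhs => rw [← hts]
        rw [hTadd]
        rfl
      simp only [hd]
      rw [hC, hT]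
      exact happ
    have hH1 : Real.log (H (T ((n : ℝ≥0) * M) ω)) ≤ ε * n := le_of_abs_le h2
    have hlogdt : Real.log (d t) ≤ (n : ℝ) * A := by
      calc Real.log (d t) ≤ Real.log (H (T ((n : ℝ≥0) * M) ω) * ρ ^ b) :=
            Real.log_le_log (hpos t) hdt
        _ = Real.log (H (T ((n : ℝ≥0) * M) ω)) + b * Real.log ρ := by
            rw [Real.log_mul (hHpos _).ne' (Real.rpow_pos_of_pos hρpos b).ne',
              Real.log_rpow hρpos]
        _ ≤ ε * n + b * ((n : ℝ) * ((M : ℝ) * c * (1 - ε))) := by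
            have := mul_le_mul_of_nonneg_left hlogρ hb.le
            linarith
        _ = (n : ℝ) * A := by rw [hA]; ring
    have htpos : (0 : ℝ) < (t : ℝ) := by
      have h6 : ((n : ℝ≥0) * M : ℝ≥0) ≤ t := htl
      have h7 : (((n : ℝ≥0) * M : ℝ≥0) : ℝ) ≤ (t : ℝ) := by exact_mod_cast h6
      have h8 : (0:ℝ) < (((n : ℝ≥0) * M : ℝ≥0) : ℝ) := by push_cast; exact hnM
      linarith
    have htu' : (t : ℝ) ≤ ((n : ℝ) + 1) * (M : ℝ) := by
      have h6 : (t : ℝ) ≤ ((((n : ℝ≥0) + 1) * M : ℝ≥0) : ℝ) := by exact_mod_cast htu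
      have h7 : ((((n : ℝ≥0) + 1) * M : ℝ≥0) : ℝ) = ((n : ℝ) + 1) * (M : ℝ) := by
        push_cast; ring
      linarith
    have hnA : (n : ℝ) * A ≤ 0 := mul_nonpos_of_nonneg_of_nonpos hnpos.le hε3
    have hn1M : (0:ℝ) < ((n : ℝ) + 1) * (M : ℝ) := by positivity
    calc Real.log (d t) / (t : ℝ) ≤ (n : ℝ) * A / (t : ℝ) :=
          div_le_div_of_nonneg_right hlogdt htpos.le
      _ ≤ (n : ℝ) * A / (((n : ℝ) + 1) * (M : ℝ)) := by
          rw [div_le_div_iff₀ htpos hn1M]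
          exact mul_le_mul_of_nonpos_left htu' hnA
      _ ≤ b * c + δ := h4.le
  -- pass from blocks to all large times
  have hmemS' : (b * c + δ) ∈ S' := by
    obtain ⟨N, hN⟩ := eventually_atTop.1 hQ
    show ∀ᶠ t : ℝ≥0 in atTop,
      Real.log (dist (C t a ω) (xbar (T t ω))) / (t : ℝ) ≤ b * c + δ
    rw [eventually_atTop]
    refine ⟨((N : ℝ≥0) + 1) * M, fun t ht => ?_⟩
    set n : ℕ := ⌊(t / M : ℝ≥0)⌋₊ with hn
    have h1 : (n : ℝ≥0) * M ≤ t := by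
      have := Nat.floor_le (zero_le : (0:ℝ≥0) ≤ t / M)
      calc (n : ℝ≥0) * M ≤ (t / M) * M := mul_le_mul_left this M
        _ = t := div_mul_cancel₀ t hM.ne'
    have h2 : t ≤ ((n : ℝ≥0) + 1) * M := by
      have := (Nat.lt_floor_add_one (t / M)).le
      calc t = (t / M) * M := (div_mul_cancel₀ t hM.ne').symm
        _ ≤ ((n : ℝ≥0) + 1) * M := mul_le_mul_left this M
    have hNn : N ≤ n := by
      have hdiv : ((N + 1 : ℕ) : ℝ≥0) ≤ t / M := by
        rw [le_div_iff₀ hM]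
        calc ((N + 1 : ℕ) : ℝ≥0) * M = ((N : ℝ≥0) + 1) * M := by push_cast; ring
          _ ≤ t := ht
      have := Nat.le_floor hdiv
      omega
    exact hN n hNn t h1 h2
  exact csInf_le hS'bd hmemS'
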